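/- Let T ≤ T' be reals, I := [T,T'], and let K_1, K_2 : ℝ × ℝ → ℂ be continuous and bounded on I², with K := K_1 + K_2. Suppose r_1, r_2, R̃ are continuous on I² and satisfy r_i = K_i + K_i ⋆ r_i and R̃ = K + K ⋆ R̃ for t ≤ t' in I. Define ρ := r_1 + r_2 + r_1 ⋆ r_2 and T̃ := K − ρ + ρ ⋆ K. Then for all t ≤ t' in I the series Σ_{k=1}^∞ ( T̃^{⋆k}(t',t) + (T̃^{⋆k} ⋆ ρ)(t',t) ) converges absolutely and R̃(t',t) = ρ(t',t) + Σ_{k=1}^∞ ( T̃^{⋆k}(t',t) + (T̃^{⋆k} ⋆ ρ)(t',t) ). (Re-summed Neumann series representation of the resolvent of a sum of two kernels.) -/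

import Mathlib

/-- Volterra convolution: `(F ⋆ G)(t',t) = ∫_t^{t'} F(t',τ)·G(τ,t) dτ`. -/
noncomputable def volterraConv (F G : ℝ → ℝ → ℂ) : ℝ → ℝ → ℂ :=
  fun t' t => ∫ τ in t..t', F t' τ * G τ t

/-- Iterated kernels: `volterraIter K n = K^{⋆(n+1)}`, i.e.
`K^{⋆1} = K` and `K^{⋆(k+1)} = K ⋆ K^{⋆k}`. -/
noncomputable def volterraIter (K : ℝ → ℝ → ℂ) : ℕ → ℝ → ℝ → ℂ
  | 0 => K
  | n + 1 => volterraConv K (volterraIter K n)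

namespace VoltAux

open MeasureTheory Set Filter intervalIntegral Topology Interval

/-- the closed triangle `T ≤ b ≤ a ≤ T'` (as pairs `(a,b)`). -/
def Tri (T T' : ℝ) : Set (ℝ × ℝ) := {p : ℝ × ℝ | T ≤ p.2 ∧ p.2 ≤ p.1 ∧ p.1 ≤ T'}

variable {T T' : ℝ}

lemma isClosed_tri : IsClosed (Tri T T') := by
  have : Tri T T' = {p : ℝ × ℝ | T ≤ p.2} ∩ ({p : ℝ × ℝ | p.2 ≤ p.1} ∩ {p : ℝ × ℝ | p.1 ≤ T'}) := by
    ext p; simp [Tri, and_assoc]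
  rw [this]
  exact (isClosed_le continuous_const continuous_snd).inter
    ((isClosed_le continuous_snd continuous_fst).inter
      (isClosed_le continuous_fst continuous_const))

lemma tri_subset : Tri T T' ⊆ Icc T T' ×ˢ Icc T T' := by
  rintro p ⟨h1, h2, h3⟩
  exact ⟨⟨h1.trans h2, h3⟩, ⟨h1, h2.trans h3⟩⟩

lemma isCompact_tri : IsCompact (Tri T T') :=
  (isCompact_Icc.prod isCompact_Icc).of_isClosed_subset isClosed_tri tri_subset

/-- Kernel predicate: continuity on the closed triangle. -/
def Ker (T T' : ℝ) (A : ℝ → ℝ → ℂ) : Prop :=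
  ContinuousOn (fun p : ℝ × ℝ => A p.1 p.2) (Tri T T')

lemma Ker.bound {A : ℝ → ℝ → ℂ} (hA : Ker T T' A) :
    ∃ C : ℝ, 0 ≤ C ∧ ∀ a b : ℝ, T ≤ b → b ≤ a → a ≤ T' → ‖A a b‖ ≤ C := by
  obtain ⟨C, hC⟩ := isCompact_tri.exists_bound_of_continuousOn hA
  exact ⟨max C 0, le_max_right _ _, fun a b h1 h2 h3 =>
    (hC (a, b) ⟨h1, h2, h3⟩).trans (le_max_left _ _)⟩

lemma Ker.contOn_left {A : ℝ → ℝ → ℂ} (hA : Ker T T' A) {t t' a : ℝ}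
    (hT : T ≤ t) (h : t' ≤ a) (ha : a ≤ T') :
    ContinuousOn (fun τ => A a τ) (Icc t t') := by
  have : (fun τ => A a τ) = (fun p : ℝ × ℝ => A p.1 p.2) ∘ (fun τ => (a, τ)) := rfl
  rw [this]
  refine hA.comp ((continuous_const.prodMk continuous_id).continuousOn) ?_
  rintro τ ⟨h1, h2⟩
  exact ⟨hT.trans h1, h2.trans h, ha⟩

lemma Ker.contOn_right {A : ℝ → ℝ → ℂ} (hA : Ker T T' A) {t t' b : ℝ}
    (hT : T ≤ b) (h : b ≤ t) (ht' : t' ≤ T') :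
    ContinuousOn (fun τ => A τ b) (Icc t t') := by
  have : (fun τ => A τ b) = (fun p : ℝ × ℝ => A p.1 p.2) ∘ (fun τ => (τ, b)) := rfl
  rw [this]
  refine hA.comp ((continuous_id.prodMk continuous_const).continuousOn) ?_
  rintro τ ⟨h1, h2⟩
  exact ⟨hT, h.trans h1, h2.trans ht'⟩

lemma Ker.contOn_mul {F G : ℝ → ℝ → ℂ} (hF : Ker T T' F) (hG : Ker T T' G)
    {t t' : ℝ} (hT : T ≤ t) (h : t ≤ t') (h' : t' ≤ T') :
    ContinuousOn (fun τ => F t' τ * G τ t) (Icc t t') :=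
  (hF.contOn_left hT le_rfl h').mul (hG.contOn_right hT le_rfl h')

lemma Ker.intervalIntegrable_mul {F G : ℝ → ℝ → ℂ} (hF : Ker T T' F) (hG : Ker T T' G)
    {t t' : ℝ} (hT : T ≤ t) (h : t ≤ t') (h' : t' ≤ T') :
    IntervalIntegrable (fun τ => F t' τ * G τ t) volume t t' := by
  apply ContinuousOn.intervalIntegrable
  rw [uIcc_of_le h]
  exact hF.contOn_mul hG hT h h'

lemma Ker.aesm_mul {F G : ℝ → ℝ → ℂ} (hF : Ker T T' F) (hG : Ker T T' G)
    {t t' : ℝ} (hT : T ≤ t) (h : t ≤ t') (h' : t' ≤ T') :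
    AEStronglyMeasurable (fun τ => F t' τ * G τ t) (volume.restrict (Ioc t t')) :=
  ((hF.contOn_mul hG hT h h').aestronglyMeasurable measurableSet_Icc).mono_measure
    (Measure.restrict_mono Ioc_subset_Icc_self le_rfl)

lemma conv_eq_indicator {F G : ℝ → ℝ → ℂ} {q : ℝ × ℝ} (hq : q ∈ Tri T T') :
    volterraConv F G q.1 q.2
      = ∫ τ, indicator (Ioc q.2 q.1) (fun τ => F q.1 τ * G τ q.2) τ
          ∂(volume.restrict (Icc T T')) := by
  have hsub : Ioc q.2 q.1 ⊆ Icc T T' := fun τ hτ =>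
    ⟨hq.1.trans hτ.1.le, hτ.2.trans hq.2.2⟩
  rw [volterraConv, integral_of_le hq.2.1, MeasureTheory.integral_indicator measurableSet_Ioc,
    Measure.restrict_restrict measurableSet_Ioc, inter_eq_left.mpr hsub]

lemma Ker.conv {F G : ℝ → ℝ → ℂ} (hF : Ker T T' F) (hG : Ker T T' G) :
    Ker T T' (volterraConv F G) := by
  obtain ⟨Cf, hCf0, hCf⟩ := hF.bound
  obtain ⟨Cg, hCg0, hCg⟩ := hG.bound
  intro p hp
  refine ContinuousWithinAt.congr ?_ (fun q hq => conv_eq_indicator hq) (conv_eq_indicator hp)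
  apply continuousWithinAt_of_dominated (bound := fun _ => Cf * Cg)
  · filter_upwards [self_mem_nhdsWithin] with q hq
    apply (aestronglyMeasurable_indicator_iff measurableSet_Ioc).2
    refine (ContinuousOn.aestronglyMeasurable (μ := volume)
      (hF.contOn_mul hG hq.1 hq.2.1 hq.2.2) measurableSet_Icc).mono_measure ?_
    rw [Measure.restrict_restrict measurableSet_Ioc]
    exact Measure.restrict_mono (inter_subset_left.trans Ioc_subset_Icc_self) le_rfl
  · filter_upwards [self_mem_nhdsWithin] with q hq
    refine Eventually.of_forall fun τ => ?_
    by_cases hτ : τ ∈ Ioc q.2 q.1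
    · rw [indicator_of_mem hτ]
      have hb1 : ‖F q.1 τ‖ ≤ Cf := hCf _ _ (hq.1.trans hτ.1.le) hτ.2 hq.2.2
      have hb2 : ‖G τ q.2‖ ≤ Cg := hCg _ _ hq.1 hτ.1.le (hτ.2.trans hq.2.2)
      calc ‖F q.1 τ * G τ q.2‖ = ‖F q.1 τ‖ * ‖G τ q.2‖ := norm_mul _ _
        _ ≤ Cf * Cg := mul_le_mul hb1 hb2 (norm_nonneg _) hCf0
    · rw [indicator_of_notMem hτ]
      simpa using mul_nonneg hCf0 hCg0
  · exact integrableOn_const measure_Icc_lt_top.ne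
  · have hae : ∀ᵐ τ ∂(volume.restrict (Icc T T')), τ ≠ p.1 ∧ τ ≠ p.2 := by
      refine ae_restrict_of_ae (ae_iff.mpr ?_)
      have hs : {τ : ℝ | ¬(τ ≠ p.1 ∧ τ ≠ p.2)} = {p.1, p.2} := by
        ext τ; simp only [mem_setOf_eq, not_and_or, not_not, mem_insert_iff, mem_singleton_iff]
      rw [hs]
      exact ((Set.finite_singleton p.2).insert p.1).measure_zero _
    filter_upwards [hae] with τ hτ
    obtain ⟨hτ1, hτ2⟩ := hτ
    rcases lt_or_gt_of_ne hτ2 with hlt | hgt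
    · -- τ < p.2 : the indicator vanishes near p
      have hV : {q : ℝ × ℝ | τ < q.2} ∈ 𝓝 p :=
        (isOpen_lt continuous_const continuous_snd).mem_nhds hlt
      rw [← continuousWithinAt_inter hV]
      refine (continuousWithinAt_const : ContinuousWithinAt (fun _ : ℝ × ℝ => (0 : ℂ)) _ _).congr (fun q hq => ?_) ?_
      · exact indicator_of_notMem (fun hmem => lt_asymm hq.2 hmem.1) _
      · exact indicator_of_notMem (fun hmem => lt_asymm hlt hmem.1) _
    · rcases lt_or_gt_of_ne hτ1 with hlt1 | hgt1
      · -- p.2 < τ < p.1 : the indicator equals the product near p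
        have hV : {q : ℝ × ℝ | q.2 < τ ∧ τ < q.1} ∈ 𝓝 p :=
          ((isOpen_lt continuous_snd continuous_const).inter
            (isOpen_lt continuous_const continuous_fst)).mem_nhds ⟨hgt, hlt1⟩
        rw [← continuousWithinAt_inter hV]
        have hc1 : ContinuousWithinAt (fun q : ℝ × ℝ => F q.1 τ)
            (Tri T T' ∩ {q : ℝ × ℝ | q.2 < τ ∧ τ < q.1}) p := by
          refine ContinuousWithinAt.comp (f := fun q : ℝ × ℝ => (q.1, τ))
            (hF (p.1, τ) ⟨hp.1.trans hgt.le, hlt1.le, hp.2.2⟩)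
            ((continuous_fst.prodMk continuous_const).continuousWithinAt) ?_
          rintro q ⟨hq, hq2⟩
          exact ⟨hq.1.trans hq2.1.le, hq2.2.le, hq.2.2⟩
        have hc2 : ContinuousWithinAt (fun q : ℝ × ℝ => G τ q.2)
            (Tri T T' ∩ {q : ℝ × ℝ | q.2 < τ ∧ τ < q.1}) p := by
          refine ContinuousWithinAt.comp (f := fun q : ℝ × ℝ => (τ, q.2))
            (hG (τ, p.2) ⟨hp.1, hgt.le, hlt1.le.trans hp.2.2⟩)
            ((continuous_const.prodMk continuous_snd).continuousWithinAt) ?_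
          rintro q ⟨hq, hq2⟩
          exact ⟨hq.1, hq2.1.le, hq2.2.le.trans hq.2.2⟩
        refine (hc1.mul hc2).congr (fun q hq => ?_) ?_
        · exact indicator_of_mem (show τ ∈ Ioc q.2 q.1 from ⟨hq.2.1, hq.2.2.le⟩) _
        · exact indicator_of_mem (show τ ∈ Ioc p.2 p.1 from ⟨hgt, hlt1.le⟩) _
      · -- p.1 < τ : the indicator vanishes near p
        have hV : {q : ℝ × ℝ | q.1 < τ} ∈ 𝓝 p :=
          (isOpen_lt continuous_fst continuous_const).mem_nhds hgt1
        rw [← continuousWithinAt_inter hV]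
        refine (continuousWithinAt_const : ContinuousWithinAt (fun _ : ℝ × ℝ => (0 : ℂ)) _ _).congr (fun q hq => ?_) ?_
        · exact indicator_of_notMem (fun hmem => absurd hmem.2 (not_le.2 hq.2)) _
        · exact indicator_of_notMem (fun hmem => absurd hmem.2 (not_le.2 hgt1)) _

lemma conv_assoc {F G H : ℝ → ℝ → ℂ} (hF : Ker T T' F) (hG : Ker T T' G)
    (hH : Ker T T' H) {t t' : ℝ} (hT : T ≤ t) (h : t ≤ t') (h' : t' ≤ T') :
    volterraConv (volterraConv F G) H t' t = volterraConv F (volterraConv G H) t' t := by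
  obtain ⟨Cf, hCf0, hCf⟩ := hF.bound
  obtain ⟨Cg, hCg0, hCg⟩ := hG.bound
  obtain ⟨Ch, hCh0, hCh⟩ := hH.bound
  set μ : Measure ℝ := volume.restrict (Ioc t t') with hμ
  haveI : IsFiniteMeasure μ := ⟨by
    rw [hμ, Measure.restrict_apply_univ]; exact measure_Ioc_lt_top⟩
  set f : ℝ × ℝ → ℂ := fun q =>
    Set.indicator {q : ℝ × ℝ | q.1 < q.2}
      (fun q => F t' q.2 * G q.2 q.1 * H q.1 t) q with hf
  have hfind : ∀ τ σ : ℝ, f (τ, σ)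
      = Set.indicator (Ioi τ) (fun σ => F t' σ * G σ τ * H τ t) σ := by
    intro τ σ
    by_cases hτσ : τ < σ <;> simp [hf, Set.indicator_apply, hτσ, mem_Ioi]
  -- the integrand is integrable on the product
  have hfint : Integrable f (μ.prod μ) := by
    have hS : MeasurableSet {q : ℝ × ℝ | q.1 < q.2} :=
      (isOpen_lt continuous_fst continuous_snd).measurableSet
    have hE : MeasurableSet {q : ℝ × ℝ | t ≤ q.1 ∧ q.1 ≤ q.2 ∧ q.2 ≤ t'} := by
      have : IsClosed {q : ℝ × ℝ | t ≤ q.1 ∧ q.1 ≤ q.2 ∧ q.2 ≤ t'} := by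
        have : {q : ℝ × ℝ | t ≤ q.1 ∧ q.1 ≤ q.2 ∧ q.2 ≤ t'}
            = {q : ℝ × ℝ | t ≤ q.1} ∩ ({q : ℝ × ℝ | q.1 ≤ q.2} ∩ {q : ℝ × ℝ | q.2 ≤ t'}) := by
          ext q; simp [and_assoc]
        rw [this]
        exact (isClosed_le continuous_const continuous_fst).inter
          ((isClosed_le continuous_fst continuous_snd).inter
            (isClosed_le continuous_snd continuous_const))
      exact this.measurableSet
    have hgcont : ContinuousOn (fun q : ℝ × ℝ => F t' q.2 * G q.2 q.1 * H q.1 t)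
        {q : ℝ × ℝ | t ≤ q.1 ∧ q.1 ≤ q.2 ∧ q.2 ≤ t'} := by
      have c1 : ContinuousOn (fun q : ℝ × ℝ => F t' q.2)
          {q : ℝ × ℝ | t ≤ q.1 ∧ q.1 ≤ q.2 ∧ q.2 ≤ t'} := by
        refine hF.comp ((continuous_const.prodMk continuous_snd).continuousOn) ?_
        rintro q ⟨h1, h2, h3⟩
        exact ⟨hT.trans (h1.trans h2), h3, h'⟩
      have c2 : ContinuousOn (fun q : ℝ × ℝ => G q.2 q.1)
          {q : ℝ × ℝ | t ≤ q.1 ∧ q.1 ≤ q.2 ∧ q.2 ≤ t'} := by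
        refine hG.comp ((continuous_snd.prodMk continuous_fst).continuousOn) ?_
        rintro q ⟨h1, h2, h3⟩
        exact ⟨hT.trans h1, h2, h3.trans h'⟩
      have c3 : ContinuousOn (fun q : ℝ × ℝ => H q.1 t)
          {q : ℝ × ℝ | t ≤ q.1 ∧ q.1 ≤ q.2 ∧ q.2 ≤ t'} := by
        refine hH.comp ((continuous_fst.prodMk continuous_const).continuousOn) ?_
        rintro q ⟨h1, h2, h3⟩
        exact ⟨hT, h1, (h2.trans h3).trans h'⟩
      exact (c1.mul c2).mul c3
    have haesm : AEStronglyMeasurable f (μ.prod μ) := by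
      rw [hf, aestronglyMeasurable_indicator_iff hS]
      refine (ContinuousOn.aestronglyMeasurable (μ := volume) hgcont hE).mono_measure ?_
      rw [hμ, Measure.prod_restrict, Measure.restrict_restrict hS, ← Measure.volume_eq_prod]
      refine Measure.restrict_mono ?_ le_rfl
      rintro q ⟨hq1, hq2, hq3⟩
      exact ⟨hq2.1.le, hq1.le, hq3.2⟩
    refine Integrable.mono' (integrable_const (Cf * Cg * Ch)) haesm ?_
    rw [hμ, Measure.prod_restrict]
    refine ae_restrict_of_forall_mem (measurableSet_Ioc.prod measurableSet_Ioc) ?_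
    rintro q ⟨hq1, hq2⟩
    by_cases hq : q ∈ {q : ℝ × ℝ | q.1 < q.2}
    · simp only [hf, indicator_of_mem hq]
      have hb1 : ‖F t' q.2‖ ≤ Cf := hCf _ _ (hT.trans hq2.1.le) hq2.2 h'
      have hb2 : ‖G q.2 q.1‖ ≤ Cg := hCg _ _ (hT.trans hq1.1.le) hq.le (hq2.2.trans h')
      have hb3 : ‖H q.1 t‖ ≤ Ch := hCh _ _ hT hq1.1.le (hq1.2.trans h')
      calc ‖F t' q.2 * G q.2 q.1 * H q.1 t‖
          = ‖F t' q.2‖ * ‖G q.2 q.1‖ * ‖H q.1 t‖ := by rw [norm_mul, norm_mul]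
        _ ≤ Cf * Cg * Ch :=
            mul_le_mul (mul_le_mul hb1 hb2 (norm_nonneg _) hCf0) hb3 (norm_nonneg _)
              (mul_nonneg hCf0 hCg0)
    · simp only [hf, indicator_of_notMem hq]
      simpa using mul_nonneg (mul_nonneg hCf0 hCg0) hCh0
  -- Step 1 : left-hand side as a double integral
  have step1 : volterraConv (volterraConv F G) H t' t = ∫ τ, (∫ σ, f (τ, σ) ∂μ) ∂μ := by
    rw [show volterraConv (volterraConv F G) H t' t
        = ∫ τ in Ioc t t', volterraConv F G t' τ * H τ t from integral_of_le h]
    refine setIntegral_congr_fun measurableSet_Ioc fun τ hτ => ?_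
    have hset : Ioi τ ∩ Ioc t t' = Ioc τ t' := by
      ext σ; constructor
      · rintro ⟨h1', h2'⟩; exact ⟨h1', h2'.2⟩
      · rintro ⟨h1', h2'⟩; exact ⟨h1', hτ.1.trans h1', h2'⟩
    calc volterraConv F G t' τ * H τ t
        = (∫ σ in Ioc τ t', F t' σ * G σ τ) * H τ t := by
          rw [show volterraConv F G t' τ = ∫ σ in Ioc τ t', F t' σ * G σ τ
            from integral_of_le hτ.2]
      _ = ∫ σ in Ioc τ t', F t' σ * G σ τ * H τ t := (MeasureTheory.integral_mul_const _ _).symm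
      _ = ∫ σ, f (τ, σ) ∂μ := by
          simp only [hfind]
          rw [MeasureTheory.integral_indicator measurableSet_Ioi, hμ,
            Measure.restrict_restrict measurableSet_Ioi, hset]
  -- Step 2 : Fubini
  have step2 : ∫ τ, (∫ σ, f (τ, σ) ∂μ) ∂μ = ∫ σ, (∫ τ, f (τ, σ) ∂μ) ∂μ :=
    integral_integral_swap hfint
  -- Step 3 : right-hand side
  have step3 : ∫ σ, (∫ τ, f (τ, σ) ∂μ) ∂μ = volterraConv F (volterraConv G H) t' t := by
    rw [show volterraConv F (volterraConv G H) t' t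
        = ∫ σ in Ioc t t', F t' σ * volterraConv G H σ t from integral_of_le h]
    refine setIntegral_congr_fun measurableSet_Ioc fun σ hσ => ?_
    have h2 : ∀ τ, f (τ, σ) = Set.indicator (Iio σ) (fun τ => F t' σ * (G σ τ * H τ t)) τ := by
      intro τ; by_cases hτσ : τ < σ <;>
        simp [hf, Set.indicator_apply, hτσ, mem_Iio, mul_assoc]
    have hset : Iio σ ∩ Ioc t t' = Ioo t σ := by
      ext τ; constructor
      · rintro ⟨h1', h2'⟩; exact ⟨h2'.1, h1'⟩
      · rintro ⟨h1', h2'⟩; exact ⟨h2', h1', h2'.le.trans hσ.2⟩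
    calc ∫ τ, f (τ, σ) ∂μ
        = ∫ τ, Set.indicator (Iio σ) (fun τ => F t' σ * (G σ τ * H τ t)) τ ∂μ := by
          simp only [h2]
      _ = ∫ τ in Ioo t σ, F t' σ * (G σ τ * H τ t) := by
          rw [MeasureTheory.integral_indicator measurableSet_Iio, hμ,
            Measure.restrict_restrict measurableSet_Iio, hset]
      _ = F t' σ * ∫ τ in Ioo t σ, G σ τ * H τ t := integral_const_mul _ _
      _ = F t' σ * volterraConv G H σ t := by
          rw [show volterraConv G H σ t = ∫ τ in Ioc t σ, G σ τ * H τ t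
              from integral_of_le hσ.1.le, integral_Ioc_eq_integral_Ioo]
  rw [step1, step2, step3]

lemma Ker.iter {A : ℝ → ℝ → ℂ} (hA : Ker T T' A) (n : ℕ) :
    Ker T T' (volterraIter A n) := by
  induction n with
  | zero => exact hA
  | succ n ih => exact hA.conv ih

lemma iter_succ_right {A : ℝ → ℝ → ℂ} (hA : Ker T T' A) (n : ℕ) {t t' : ℝ}
    (hT : T ≤ t) (h : t ≤ t') (h' : t' ≤ T') :
    volterraIter A (n + 1) t' t = volterraConv (volterraIter A n) A t' t := by
  induction n generalizing t t' with
  | zero => rfl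
  | succ n ih =>
    show volterraConv A (volterraIter A (n + 1)) t' t = _
    have e1 : volterraConv A (volterraIter A (n + 1)) t' t
        = volterraConv A (volterraConv (volterraIter A n) A) t' t := by
      rw [volterraConv, volterraConv]
      refine integral_congr fun τ hτ => ?_
      rw [uIcc_of_le h] at hτ
      rw [ih hT hτ.1 (hτ.2.trans h')]
    rw [e1, ← conv_assoc hA (hA.iter n) hA hT h h']
    rfl

lemma iter_bound {A : ℝ → ℝ → ℂ} (hA : Ker T T' A) {C : ℝ} (hC0 : 0 ≤ C)
    (hC : ∀ a b : ℝ, T ≤ b → b ≤ a → a ≤ T' → ‖A a b‖ ≤ C) (n : ℕ) :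
    ∀ a b : ℝ, T ≤ b → b ≤ a → a ≤ T' →
      ‖volterraIter A n a b‖ ≤ C ^ (n + 1) * (a - b) ^ n / n.factorial := by
  induction n with
  | zero => intro a b h1 h2 h3; simpa [volterraIter] using hC a b h1 h2 h3
  | succ n ih =>
    intro a b h1 h2 h3
    have hint : ∫ τ in b..a, C ^ (n + 2) / n.factorial * (τ - b) ^ n
        = C ^ (n + 2) * (a - b) ^ (n + 1) / (n + 1).factorial := by
      rw [intervalIntegral.integral_const_mul,
        intervalIntegral.integral_comp_sub_right (fun x => x ^ n) b, integral_pow, sub_self,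
        zero_pow (Nat.succ_ne_zero n), Nat.factorial_succ]
      have hn : (n.factorial : ℝ) ≠ 0 := Nat.cast_ne_zero.2 n.factorial_ne_zero
      have hn1 : (n : ℝ) + 1 ≠ 0 := by positivity
      push_cast
      field_simp
      ring
    have hb : ∀ᵐ τ ∂(volume.restrict (Ι b a)),
        ‖A a τ * volterraIter A n τ b‖ ≤ C ^ (n + 2) / n.factorial * (τ - b) ^ n := by
      refine ae_restrict_of_forall_mem measurableSet_uIoc fun τ hτ => ?_
      rw [uIoc_of_le h2] at hτ
      have hb1 : ‖A a τ‖ ≤ C := hC a τ (h1.trans hτ.1.le) hτ.2 h3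
      have hb2 : ‖volterraIter A n τ b‖ ≤ C ^ (n + 1) * (τ - b) ^ n / n.factorial :=
        ih τ b h1 hτ.1.le (hτ.2.trans h3)
      calc ‖A a τ * volterraIter A n τ b‖ = ‖A a τ‖ * ‖volterraIter A n τ b‖ := norm_mul _ _
        _ ≤ C * (C ^ (n + 1) * (τ - b) ^ n / n.factorial) :=
            mul_le_mul hb1 hb2 (norm_nonneg _) hC0
        _ = C ^ (n + 2) / n.factorial * (τ - b) ^ n := by ring
    have hgi : IntervalIntegrable (fun τ => C ^ (n + 2) / n.factorial * (τ - b) ^ n)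
        volume b a := (continuous_const.mul ((continuous_id.sub continuous_const).pow n)
        ).intervalIntegrable _ _
    calc ‖volterraIter A (n + 1) a b‖
        ≤ |∫ τ in b..a, C ^ (n + 2) / n.factorial * (τ - b) ^ n| :=
          intervalIntegral.norm_integral_le_abs_of_norm_le hb hgi
      _ = C ^ (n + 1 + 1) * (a - b) ^ (n + 1) / (n + 1).factorial := by
          rw [hint]
          exact abs_of_nonneg (div_nonneg (mul_nonneg (pow_nonneg hC0 _)
            (pow_nonneg (sub_nonneg.2 h2) _)) (Nat.cast_nonneg _))

lemma tsum_intervalIntegral_swap {f : ℕ → ℝ → ℂ} {t t' : ℝ} (h : t ≤ t')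
    (hm : ∀ k, AEStronglyMeasurable (f k) (volume.restrict (Ioc t t')))
    {u : ℕ → ℝ} (hu : Summable u) (hu0 : ∀ k, 0 ≤ u k)
    (hb : ∀ k, ∀ τ ∈ Ioc t t', ‖f k τ‖ ≤ u k) :
    ∫ τ in t..t', (∑' k, f k τ) = ∑' k, ∫ τ in t..t', f k τ := by
  simp only [integral_of_le h]
  refine MeasureTheory.integral_tsum hm ?_
  have hle : ∀ k, ∫⁻ τ, ‖f k τ‖₊ ∂(volume.restrict (Ioc t t'))
      ≤ ENNReal.ofReal (u k) * ENNReal.ofReal (t' - t) := by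
    intro k
    have h1 : ∫⁻ τ, ‖f k τ‖₊ ∂(volume.restrict (Ioc t t'))
        ≤ ∫⁻ _, ENNReal.ofReal (u k) ∂(volume.restrict (Ioc t t')) := by
      refine lintegral_mono_ae ?_
      refine ae_restrict_of_forall_mem measurableSet_Ioc fun τ hτ => ?_
      rw [← enorm_eq_nnnorm, ← ofReal_norm]
      exact ENNReal.ofReal_le_ofReal (hb k τ hτ)
    simpa [Real.volume_Ioc] using h1
  refine ne_top_of_le_ne_top ?_ (ENNReal.tsum_le_tsum hle)
  rw [ENNReal.tsum_mul_right, ← ENNReal.ofReal_tsum_of_nonneg hu0 hu]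
  exact ENNReal.mul_ne_top ENNReal.ofReal_ne_top ENNReal.ofReal_ne_top

end VoltAux

open VoltAux MeasureTheory Set Filter intervalIntegral Topology Interval

/-- Re-summed Neumann series representation of the resolvent of a sum of two
kernels: with `ρ = r₁ + r₂ + r₁ ⋆ r₂` and `T̃ = K − ρ + ρ ⋆ K`, the series
`Σ_{k≥1} (T̃^{⋆k}(t',t) + (T̃^{⋆k} ⋆ ρ)(t',t))` converges absolutely and
`R̃ = ρ + Σ_{k≥1} (T̃^{⋆k} + T̃^{⋆k} ⋆ ρ)` on `t ≤ t'` in `I = [T,T']`.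
Here `volterraIter Ttil k = T̃^{⋆(k+1)}`, so the sum over `k : ℕ` below is the
sum over `k ≥ 1`. -/
theorem stmt_10 (T T' : ℝ) (hTT : T ≤ T')
    (K₁ K₂ : ℝ → ℝ → ℂ)
    (hK1cont : ContinuousOn (fun p : ℝ × ℝ => K₁ p.1 p.2)
      (Set.Icc T T' ×ˢ Set.Icc T T'))
    (hK2cont : ContinuousOn (fun p : ℝ × ℝ => K₂ p.1 p.2)
      (Set.Icc T T' ×ˢ Set.Icc T T'))
    (hK1bdd : ∃ C : ℝ, ∀ t' ∈ Set.Icc T T', ∀ t ∈ Set.Icc T T', ‖K₁ t' t‖ ≤ C)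
    (hK2bdd : ∃ C : ℝ, ∀ t' ∈ Set.Icc T T', ∀ t ∈ Set.Icc T T', ‖K₂ t' t‖ ≤ C)
    (K : ℝ → ℝ → ℂ) (hK : ∀ t' t, K t' t = K₁ t' t + K₂ t' t)
    (r₁ r₂ R : ℝ → ℝ → ℂ)
    (hr1cont : ContinuousOn (fun p : ℝ × ℝ => r₁ p.1 p.2)
      (Set.Icc T T' ×ˢ Set.Icc T T'))
    (hr2cont : ContinuousOn (fun p : ℝ × ℝ => r₂ p.1 p.2)
      (Set.Icc T T' ×ˢ Set.Icc T T'))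
    (hRcont : ContinuousOn (fun p : ℝ × ℝ => R p.1 p.2)
      (Set.Icc T T' ×ˢ Set.Icc T T'))
    (hr1 : ∀ t ∈ Set.Icc T T', ∀ t' ∈ Set.Icc T T', t ≤ t' →
      r₁ t' t = K₁ t' t + volterraConv K₁ r₁ t' t)
    (hr2 : ∀ t ∈ Set.Icc T T', ∀ t' ∈ Set.Icc T T', t ≤ t' →
      r₂ t' t = K₂ t' t + volterraConv K₂ r₂ t' t)
    (hRres : ∀ t ∈ Set.Icc T T', ∀ t' ∈ Set.Icc T T', t ≤ t' →
      R t' t = K t' t + volterraConv K R t' t)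
    (ρ : ℝ → ℝ → ℂ)
    (hρ : ∀ t' t, ρ t' t = r₁ t' t + r₂ t' t + volterraConv r₁ r₂ t' t)
    (Ttil : ℝ → ℝ → ℂ)
    (hTtil : ∀ t' t, Ttil t' t = K t' t - ρ t' t + volterraConv ρ K t' t) :
    ∀ t ∈ Set.Icc T T', ∀ t' ∈ Set.Icc T T', t ≤ t' →
      Summable (fun k : ℕ =>
        ‖volterraIter Ttil k t' t + volterraConv (volterraIter Ttil k) ρ t' t‖) ∧
      R t' t = ρ t' t + ∑' k : ℕ,
        (volterraIter Ttil k t' t + volterraConv (volterraIter Ttil k) ρ t' t) := by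
  intro t ht t' ht' htt
  obtain ⟨hTt, htT'⟩ := ht
  obtain ⟨hTt', ht'T'⟩ := ht'
  -- kernels are continuous on the triangle
  have kK1 : Ker T T' K₁ := hK1cont.mono tri_subset
  have kK2 : Ker T T' K₂ := hK2cont.mono tri_subset
  have kr1 : Ker T T' r₁ := hr1cont.mono tri_subset
  have kr2 : Ker T T' r₂ := hr2cont.mono tri_subset
  have kR : Ker T T' R := hRcont.mono tri_subset
  have kK : Ker T T' K := by
    show ContinuousOn _ _
    rw [show (fun p : ℝ × ℝ => K p.1 p.2)
      = fun p : ℝ × ℝ => K₁ p.1 p.2 + K₂ p.1 p.2 from funext fun p => hK p.1 p.2]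
    exact ContinuousOn.add kK1 kK2
  have kρ : Ker T T' ρ := by
    show ContinuousOn _ _
    rw [show (fun p : ℝ × ℝ => ρ p.1 p.2)
      = fun p : ℝ × ℝ => r₁ p.1 p.2 + r₂ p.1 p.2 + volterraConv r₁ r₂ p.1 p.2
      from funext fun p => hρ p.1 p.2]
    exact ContinuousOn.add (ContinuousOn.add kr1 kr2) (kr1.conv kr2)
  have kT : Ker T T' Ttil := by
    show ContinuousOn _ _
    rw [show (fun p : ℝ × ℝ => Ttil p.1 p.2)
      = fun p : ℝ × ℝ => K p.1 p.2 - ρ p.1 p.2 + volterraConv ρ K p.1 p.2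
      from funext fun p => hTtil p.1 p.2]
    exact ContinuousOn.add (ContinuousOn.sub kK kρ) (kρ.conv kK)
  -- bounds
  obtain ⟨CT, hCT0, hCT⟩ := kT.bound
  obtain ⟨Cρ, hCρ0, hCρ⟩ := kρ.bound
  set L : ℝ := T' - T with hL
  have hL0 : 0 ≤ L := sub_nonneg.2 hTT
  set M : ℕ → ℝ := fun k => CT ^ (k + 1) * L ^ k / k.factorial with hM
  have hM0 : ∀ k, 0 ≤ M k := fun k =>
    div_nonneg (mul_nonneg (pow_nonneg hCT0 _) (pow_nonneg hL0 _)) (Nat.cast_nonneg _)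
  have hMsum : Summable M := by
    refine ((Real.summable_pow_div_factorial (CT * L)).mul_left CT).congr fun k => ?_
    rw [hM]
    show CT * ((CT * L) ^ k / k.factorial) = CT ^ (k + 1) * L ^ k / k.factorial
    rw [mul_pow]; ring
  have kIter : ∀ k, Ker T T' (volterraIter Ttil k) := kT.iter
  have iterB : ∀ k, ∀ a b : ℝ, T ≤ b → b ≤ a → a ≤ T' → ‖volterraIter Ttil k a b‖ ≤ M k := by
    intro k a b h1 h2 h3
    refine (iter_bound kT hCT0 hCT k a b h1 h2 h3).trans ?_
    rw [hM]
    have hab : a - b ≤ L := by rw [hL]; linarith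
    have hpow : (a - b) ^ k ≤ L ^ k := pow_le_pow_left₀ (sub_nonneg.2 h2) hab k
    exact (div_le_div_iff_of_pos_right (Nat.cast_pos.mpr k.factorial_pos)).2
      (mul_le_mul_of_nonneg_left hpow (pow_nonneg hCT0 _))
  -- N
  set N : ℝ → ℝ → ℂ := fun a b => ∑' k, volterraIter Ttil k a b with hN
  have kN : Ker T T' N := by
    show ContinuousOn _ _
    exact continuousOn_tsum (fun k => kIter k) hMsum
      (fun k p hp => iterB k p.1 p.2 hp.1 hp.2.1 hp.2.2)
  have kNρ : Ker T T' (volterraConv N ρ) := kN.conv kρ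
  set S : ℝ → ℝ → ℂ := fun a b => ρ a b + N a b + volterraConv N ρ a b with hS
  have kS : Ker T T' S := ContinuousOn.add (ContinuousOn.add kρ kN) kNρ
  have sum1 : ∀ a b : ℝ, T ≤ b → b ≤ a → a ≤ T' →
      Summable (fun k => volterraIter Ttil k a b) := fun a b h1 h2 h3 =>
    Summable.of_norm (Summable.of_nonneg_of_le (fun k => norm_nonneg _)
      (fun k => iterB k a b h1 h2 h3) hMsum)
  have convB : ∀ k, ∀ a b : ℝ, T ≤ b → b ≤ a → a ≤ T' →
      ‖volterraConv (volterraIter Ttil k) ρ a b‖ ≤ M k * Cρ * L := by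
    intro k a b h1 h2 h3
    have hbd : ∀ τ ∈ Ι b a, ‖volterraIter Ttil k a τ * ρ τ b‖ ≤ M k * Cρ := by
      intro τ hτ
      rw [uIoc_of_le h2] at hτ
      rw [norm_mul]
      exact mul_le_mul (iterB k a τ (h1.trans hτ.1.le) hτ.2 h3)
        (hCρ τ b h1 hτ.1.le (hτ.2.trans h3)) (norm_nonneg _) (hM0 k)
    refine (intervalIntegral.norm_integral_le_of_norm_le_const hbd).trans ?_
    rw [abs_of_nonneg (sub_nonneg.2 h2)]
    have hab : a - b ≤ L := by rw [hL]; linarith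
    exact mul_le_mul_of_nonneg_left hab (mul_nonneg (hM0 k) hCρ0)
  -- (B) : N ⋆ Ttil = N - Ttil on the triangle
  have hNres : ∀ a b : ℝ, T ≤ b → b ≤ a → a ≤ T' →
      volterraConv N Ttil a b = N a b - Ttil a b := by
    intro a b h1 h2 h3
    have e1 : volterraConv N Ttil a b
        = ∑' k, volterraConv (volterraIter Ttil k) Ttil a b := by
      show (∫ τ in b..a, N a τ * Ttil τ b) = _
      have e2 : ∀ τ : ℝ, N a τ * Ttil τ b
          = ∑' k, volterraIter Ttil k a τ * Ttil τ b := fun τ => by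
        rw [hN]; exact tsum_mul_right.symm
      simp only [e2]
      exact tsum_intervalIntegral_swap h2
        (fun k => (kIter k).aesm_mul kT h1 h2 h3)
        (hMsum.mul_right CT) (fun k => mul_nonneg (hM0 k) hCT0)
        (fun k τ hτ => by
          rw [norm_mul]
          exact mul_le_mul (iterB k a τ (h1.trans hτ.1.le) hτ.2 h3)
            (hCT τ b h1 hτ.1.le (hτ.2.trans h3)) (norm_nonneg _) (hM0 k))
    rw [e1, tsum_congr (fun k => (iter_succ_right kT k h1 h2 h3).symm)]
    have e3 := Summable.tsum_eq_zero_add (sum1 a b h1 h2 h3)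
    rw [hN]
    show ∑' k, volterraIter Ttil (k + 1) a b
      = (∑' k, volterraIter Ttil k a b) - Ttil a b
    rw [e3]
    show _ = Ttil a b + (∑' k, volterraIter Ttil (k + 1) a b) - Ttil a b
    ring
  -- (C) : S ⋆ K = S - K on the triangle
  have hSK : ∀ a b : ℝ, T ≤ b → b ≤ a → a ≤ T' →
      volterraConv S K a b = S a b - K a b := by
    intro a b h1 h2 h3
    have i1 : IntervalIntegrable (fun τ => ρ a τ * K τ b) volume b a :=
      kρ.intervalIntegrable_mul kK h1 h2 h3
    have i2 : IntervalIntegrable (fun τ => N a τ * K τ b) volume b a :=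
      kN.intervalIntegrable_mul kK h1 h2 h3
    have i3 : IntervalIntegrable (fun τ => volterraConv N ρ a τ * K τ b) volume b a :=
      kNρ.intervalIntegrable_mul kK h1 h2 h3
    have i5 : IntervalIntegrable (fun τ => N a τ * Ttil τ b) volume b a :=
      kN.intervalIntegrable_mul kT h1 h2 h3
    have i6 : IntervalIntegrable (fun τ => N a τ * ρ τ b) volume b a :=
      kN.intervalIntegrable_mul kρ h1 h2 h3
    have i7 : IntervalIntegrable (fun τ => N a τ * volterraConv ρ K τ b) volume b a :=
      kN.intervalIntegrable_mul (kρ.conv kK) h1 h2 h3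
    have e1 : volterraConv S K a b
        = volterraConv ρ K a b + volterraConv N K a b
          + volterraConv (volterraConv N ρ) K a b := by
      show (∫ τ in b..a, S a τ * K τ b) = _
      rw [show (fun τ => S a τ * K τ b) = fun τ =>
          ρ a τ * K τ b + N a τ * K τ b + volterraConv N ρ a τ * K τ b
        from funext fun τ => by rw [hS]; ring]
      rw [intervalIntegral.integral_add (i1.add i2) i3, intervalIntegral.integral_add i1 i2]
      rfl
    have e2 : volterraConv (volterraConv N ρ) K a b
        = volterraConv N (volterraConv ρ K) a b := conv_assoc kN kρ kK h1 h2 h3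
    have e4 : volterraConv N K a b + volterraConv N (volterraConv ρ K) a b
        = volterraConv N Ttil a b + volterraConv N ρ a b := by
      show (∫ τ in b..a, N a τ * K τ b) + (∫ τ in b..a, N a τ * volterraConv ρ K τ b)
        = (∫ τ in b..a, N a τ * Ttil τ b) + (∫ τ in b..a, N a τ * ρ τ b)
      rw [← intervalIntegral.integral_add i2 i7, ← intervalIntegral.integral_add i5 i6]
      refine integral_congr fun τ hτ => ?_
      have := hTtil τ b
      calc N a τ * K τ b + N a τ * volterraConv ρ K τ b
          = N a τ * (Ttil τ b + ρ τ b) := by rw [this]; ring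
        _ = N a τ * Ttil τ b + N a τ * ρ τ b := by ring
    rw [e1, e2, show volterraConv ρ K a b + volterraConv N K a b
        + volterraConv N (volterraConv ρ K) a b
      = volterraConv ρ K a b
        + (volterraConv N K a b + volterraConv N (volterraConv ρ K) a b) from by ring,
      e4, hNres a b h1 h2 h3, hS]
    show volterraConv ρ K a b + (N a b - Ttil a b + volterraConv N ρ a b)
      = ρ a b + N a b + volterraConv N ρ a b - K a b
    rw [hTtil a b]
    ring
  -- (D) : R = S at (t', t)
  have iSK : IntervalIntegrable (fun τ => S t' τ * K τ t) volume t t' :=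
    kS.intervalIntegrable_mul kK hTt htt ht'T'
  have iSKR : IntervalIntegrable (fun τ => S t' τ * volterraConv K R τ t) volume t t' :=
    kS.intervalIntegrable_mul (kK.conv kR) hTt htt ht'T'
  have iSR : IntervalIntegrable (fun τ => S t' τ * R τ t) volume t t' :=
    kS.intervalIntegrable_mul kR hTt htt ht'T'
  have iKR : IntervalIntegrable (fun τ => K t' τ * R τ t) volume t t' :=
    kK.intervalIntegrable_mul kR hTt htt ht'T'
  have eSR : volterraConv S R t' t
      = volterraConv S K t' t + volterraConv S (volterraConv K R) t' t := by
    show (∫ τ in t..t', S t' τ * R τ t)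
      = (∫ τ in t..t', S t' τ * K τ t) + ∫ τ in t..t', S t' τ * volterraConv K R τ t
    rw [← intervalIntegral.integral_add iSK iSKR]
    refine integral_congr fun τ hτ => ?_
    rw [uIcc_of_le htt] at hτ
    rw [hRres t ⟨hTt, htT'⟩ τ ⟨hTt.trans hτ.1, hτ.2.trans ht'T'⟩ hτ.1]
    ring
  have eassoc : volterraConv S (volterraConv K R) t' t
      = volterraConv (volterraConv S K) R t' t :=
    (conv_assoc kS kK kR hTt htt ht'T').symm
  have eSKR : volterraConv (volterraConv S K) R t' t
      = volterraConv S R t' t - volterraConv K R t' t := by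
    show (∫ τ in t..t', volterraConv S K t' τ * R τ t)
      = (∫ τ in t..t', S t' τ * R τ t) - (∫ τ in t..t', K t' τ * R τ t)
    rw [← intervalIntegral.integral_sub iSR iKR]
    refine integral_congr fun τ hτ => ?_
    rw [uIcc_of_le htt] at hτ
    rw [hSK t' τ (hTt.trans hτ.1) hτ.2 ht'T']
    ring
  have eKR : volterraConv K R t' t = volterraConv S K t' t := by
    rw [eassoc, eSKR] at eSR
    linear_combination eSR
  have eRS : R t' t = S t' t := by
    rw [hRres t ⟨hTt, htT'⟩ t' ⟨hTt', ht'T'⟩ htt, eKR, hSK t' t hTt htt ht'T']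
    ring
  constructor
  · refine Summable.of_nonneg_of_le (fun k => norm_nonneg _) (fun k => ?_)
      (hMsum.mul_right (1 + Cρ * L))
    calc ‖volterraIter Ttil k t' t + volterraConv (volterraIter Ttil k) ρ t' t‖
        ≤ ‖volterraIter Ttil k t' t‖ + ‖volterraConv (volterraIter Ttil k) ρ t' t‖ :=
          norm_add_le _ _
      _ ≤ M k + M k * Cρ * L :=
          add_le_add (iterB k t' t hTt htt ht'T') (convB k t' t hTt htt ht'T')
      _ = M k * (1 + Cρ * L) := by ring
  · have s1 : Summable (fun k => volterraIter Ttil k t' t) := sum1 t' t hTt htt ht'T'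
    have s2 : Summable (fun k => volterraConv (volterraIter Ttil k) ρ t' t) :=
      Summable.of_norm (Summable.of_nonneg_of_le (fun k => norm_nonneg _)
        (fun k => convB k t' t hTt htt ht'T') ((hMsum.mul_right Cρ).mul_right L))
    rw [eRS, Summable.tsum_add s1 s2]
    have e6 : ∑' k, volterraConv (volterraIter Ttil k) ρ t' t = volterraConv N ρ t' t := by
      symm
      show (∫ τ in t..t', N t' τ * ρ τ t) = _
      have e7 : ∀ τ : ℝ, N t' τ * ρ τ t
          = ∑' k, volterraIter Ttil k t' τ * ρ τ t := fun τ => by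
        rw [hN]; exact tsum_mul_right.symm
      simp only [e7]
      exact tsum_intervalIntegral_swap htt
        (fun k => (kIter k).aesm_mul kρ hTt htt ht'T')
        (hMsum.mul_right Cρ) (fun k => mul_nonneg (hM0 k) hCρ0)
        (fun k τ hτ => by
          rw [norm_mul]
          exact mul_le_mul (iterB k t' τ (hTt.trans hτ.1.le) hτ.2 ht'T')
            (hCρ τ t hTt hτ.1.le (hτ.2.trans ht'T')) (norm_nonneg _) (hM0 k))
    rw [e6, hS]
    show ρ t' t + N t' t + volterraConv N ρ t' t
      = ρ t' t + ((∑' k, volterraIter Ttil k t' t) + volterraConv N ρ t' t)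
    rw [hN]
    ring
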